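/- arXiv:1202.6663 — 2 statements merged into one kernel-verified Lean document; each statement's English description precedes it below -/
import Mathlib

section
/- Let n ≥ r ≥ 1 be integers and let P ⊂ ℝⁿ be a lattice polytope. Then the following are equivalent: (i) there exist a ℤ-affine isomorphism T : ℝⁿ → ℝ^(n−r) × ℝʳ (i.e. T(x) = Ax + b with A ∈ GL_n(ℤ) and b ∈ ℤⁿ, under the standard identification ℝ^(n−r) × ℝʳ ≅ ℝⁿ) and lattice polytopes P₀, …, P_r ⊂ ℝ^(n−r) such that T(P) equals the Cayley sum P₀ * ⋯ * P_r; (ii) some lattice projection ℝⁿ → ℝʳ maps P onto a unimodular r-simplex. -/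
open Set Function

noncomputable section

/-- The real vector with the same coordinates as an integer vector. -/
def toRealVec {n : ℕ} (u : Fin n → ℤ) : Fin n → ℝ := fun i => (u i : ℝ)

/-- A lattice polytope in `ℝⁿ` is the convex hull of finitely many points of `ℤⁿ`. -/
def IsLatticePolytope {n : ℕ} (P : Set (Fin n → ℝ)) : Prop :=
  ∃ S : Finset (Fin n → ℤ), S.Nonempty ∧ P = convexHull ℝ (↑(S.image toRealVec))

/-- The `ℝ`-linear map `ℝⁿ → ℝᵐ` induced by an integer matrix. -/
def realMap {m n : ℕ} (A : Matrix (Fin m) (Fin n) ℤ) : (Fin n → ℝ) → (Fin m → ℝ) :=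
  fun x => (A.map (fun z : ℤ => (z : ℝ))).mulVec x

/-- A unimodular `r`-simplex in `ℝʳ`: a lattice translate of `conv{0, e₁, …, e_r}`. -/
def IsUnimodularSimplex {r : ℕ} (S : Set (Fin r → ℝ)) : Prop :=
  ∃ v : Fin r → ℤ,
    S = (fun x => toRealVec v + x) ''
      convexHull ℝ (insert 0 (Set.range fun i : Fin r => Pi.single i (1 : ℝ)))

/-- The point of `ℝⁿ` obtained by juxtaposing `p ∈ ℝ^(n-r)` and `q ∈ ℝʳ`
(under the standard identification `ℝ^(n-r) × ℝʳ ≅ ℝⁿ`, assuming `r ≤ n`). -/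
def juxtapose {n r : ℕ} (h : r ≤ n) (p : Fin (n - r) → ℝ) (q : Fin r → ℝ) : Fin n → ℝ :=
  fun i => Sum.elim p q (finSumFinEquiv.symm (Fin.cast (Nat.sub_add_cancel h).symm i))

/-- The vertices `0, e₁, …, e_r` of the standard unimodular `r`-simplex,
indexed by `Fin (r+1)`. -/
def cayleyVert {r : ℕ} : Fin (r + 1) → (Fin r → ℝ) :=
  Fin.cases 0 (fun i => Pi.single i 1)

/-- The Cayley sum `P₀ * ⋯ * P_r ⊆ ℝ^(n-r) × ℝʳ ≅ ℝⁿ` of lattice polytopes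
`P₀, …, P_r ⊆ ℝ^(n-r)`: the convex hull of `(P₀ × 0) ∪ (P₁ × e₁) ∪ ⋯ ∪ (P_r × e_r)`. -/
def cayleySum {n r : ℕ} (h : r ≤ n) (Q : Fin (r + 1) → Set (Fin (n - r) → ℝ)) :
    Set (Fin n → ℝ) :=
  convexHull ℝ (⋃ k : Fin (r + 1), (fun p => juxtapose h p (cayleyVert k)) '' Q k)

variable {n r : ℕ}

def EE (h : r ≤ n) : Fin n ≃ (Fin (n - r) ⊕ Fin r) :=
  (finCongr (Nat.sub_add_cancel h).symm).trans finSumFinEquiv.symm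

lemma juxtapose_eq (h : r ≤ n) (p : Fin (n - r) → ℝ) (q : Fin r → ℝ) :
    juxtapose h p q = fun i => Sum.elim p q (EE h i) := rfl

def idxM (h : r ≤ n) (a : Fin (n - r)) : Fin n := (EE h).symm (Sum.inl a)
def idxR (h : r ≤ n) (j : Fin r) : Fin n := (EE h).symm (Sum.inr j)

@[simp] lemma EE_idxM (h : r ≤ n) (a) : EE h (idxM h a) = Sum.inl a := by simp [idxM]
@[simp] lemma EE_idxR (h : r ≤ n) (j) : EE h (idxR h j) = Sum.inr j := by simp [idxR]

@[simp] lemma juxtapose_idxM (h : r ≤ n) (p q a) : juxtapose h p q (idxM h a) = p a := by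
  rw [juxtapose_eq]; simp
@[simp] lemma juxtapose_idxR (h : r ≤ n) (p q j) : juxtapose h p q (idxR h j) = q j := by
  rw [juxtapose_eq]; simp

lemma juxtapose_eta (h : r ≤ n) (x : Fin n → ℝ) :
    juxtapose h (x ∘ idxM h) (x ∘ idxR h) = x := by
  funext i
  rw [juxtapose_eq]
  rcases hs : EE h i with a | j
  · have : i = idxM h a := by rw [idxM, ← hs, Equiv.symm_apply_apply]
    simp [this]
  · have : i = idxR h j := by rw [idxR, ← hs, Equiv.symm_apply_apply]
    simp [this]

def juxZ (h : r ≤ n) (p : Fin (n - r) → ℤ) (q : Fin r → ℤ) : Fin n → ℤ :=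
  fun i => Sum.elim p q (EE h i)

@[simp] lemma juxZ_idxR (h : r ≤ n) (p q j) : juxZ h p q (idxR h j) = q j := by simp [juxZ]
@[simp] lemma juxZ_idxM (h : r ≤ n) (p q a) : juxZ h p q (idxM h a) = p a := by simp [juxZ]

def projRL (h : r ≤ n) : (Fin n → ℝ) →ₗ[ℝ] (Fin r → ℝ) := LinearMap.funLeft ℝ ℝ (idxR h)

@[simp] lemma projRL_apply (h : r ≤ n) (x j) : projRL h x j = x (idxR h j) := rfl

lemma projRL_juxtapose (h : r ≤ n) (p q) : projRL h (juxtapose h p q) = q := by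
  funext j; simp

def juxA (h : r ≤ n) (q : Fin r → ℝ) : (Fin (n - r) → ℝ) →ᵃ[ℝ] (Fin n → ℝ) where
  toFun p := juxtapose h p q
  linear :=
    { toFun := fun p => juxtapose h p 0
      map_add' := by
        intro p p'; funext i; simp only [juxtapose_eq]
        rcases hs : EE h i with a | j <;> simp [hs]
      map_smul' := by
        intro c p; funext i; simp only [juxtapose_eq]
        rcases hs : EE h i with a | j <;> simp [hs] }
  map_vadd' := by
    intro p v; funext i
    simp only [juxtapose_eq, LinearMap.coe_mk, AddHom.coe_mk]
    show Sum.elim (v + p) q (EE h i) = Sum.elim v 0 (EE h i) + Sum.elim p q (EE h i)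
    rcases hs : EE h i with a | j <;> simp [hs]

@[simp] lemma juxA_apply (h : r ≤ n) (q p) : juxA h q p = juxtapose h p q := rfl

lemma realMap_apply {m : ℕ} (A : Matrix (Fin m) (Fin n) ℤ) (x : Fin n → ℝ) (i : Fin m) :
    realMap A x i = ∑ j, (A i j : ℝ) * x j := by
  simp [realMap, Matrix.mulVec, dotProduct, Matrix.map_apply]

lemma realMap_toRealVec {m : ℕ} (A : Matrix (Fin m) (Fin n) ℤ) (u : Fin n → ℤ) :
    realMap A (toRealVec u) = toRealVec (A.mulVec u) := by
  funext i
  simp only [realMap_apply, toRealVec, Matrix.mulVec, dotProduct]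
  push_cast
  rfl

lemma realMap_linear {m : ℕ} (A : Matrix (Fin m) (Fin n) ℤ) :
    realMap A = ⇑((A.map (fun z : ℤ => (z : ℝ))).mulVecLin) := rfl

/-! ### Simplex facts -/

@[simp] lemma cayleyVert_zero : (cayleyVert : Fin (r+1) → _) 0 = 0 := rfl
@[simp] lemma cayleyVert_succ (i : Fin r) : cayleyVert i.succ = Pi.single i (1 : ℝ) := by
  simp [cayleyVert]

lemma range_cayleyVert :
    Set.range (cayleyVert (r := r)) =
      insert 0 (Set.range fun i : Fin r => Pi.single i (1 : ℝ)) := by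
  ext x
  constructor
  · rintro ⟨k, rfl⟩
    rcases Fin.eq_zero_or_eq_succ k with rfl | ⟨i, rfl⟩
    · simp
    · exact Set.mem_insert_of_mem _ ⟨i, by simp⟩
  · rintro (rfl | ⟨i, rfl⟩)
    · exact ⟨0, rfl⟩
    · exact ⟨i.succ, by simp⟩

def stdCorner (r : ℕ) : Set (Fin r → ℝ) := convexHull ℝ (Set.range (cayleyVert (r := r)))

lemma stdCorner_nonneg {x : Fin r → ℝ} (hx : x ∈ stdCorner r) (i : Fin r) : 0 ≤ x i := by
  have hconv : Convex ℝ {w : Fin r → ℝ | 0 ≤ w i} :=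
    convex_halfSpace_ge (⟨fun a b => rfl, fun c a => rfl⟩ : IsLinearMap ℝ (fun w : Fin r → ℝ => w i)) 0
  have : stdCorner r ⊆ {w | 0 ≤ w i} := by
    apply convexHull_min _ hconv
    rintro _ ⟨k, rfl⟩
    rcases Fin.eq_zero_or_eq_succ k with rfl | ⟨j, rfl⟩
    · simp
    · simp only [cayleyVert_succ, Set.mem_setOf_eq, Pi.single_apply]
      split_ifs <;> norm_num
  exact this hx

lemma stdCorner_sum_le {x : Fin r → ℝ} (hx : x ∈ stdCorner r) : ∑ i, x i ≤ 1 := by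
  have hlin : IsLinearMap ℝ (fun w : Fin r → ℝ => ∑ i, w i) :=
    ⟨fun a b => by simp [Finset.sum_add_distrib], fun c a => by simp [Finset.mul_sum]⟩
  have hconv : Convex ℝ {w : Fin r → ℝ | ∑ i, w i ≤ 1} := convex_halfSpace_le hlin 1
  have : stdCorner r ⊆ {w | ∑ i, w i ≤ 1} := by
    apply convexHull_min _ hconv
    rintro _ ⟨k, rfl⟩
    rcases Fin.eq_zero_or_eq_succ k with rfl | ⟨j, rfl⟩
    · simp
    · simp
  exact this hx

lemma eq_vert_of_int {x : Fin r → ℝ} (hx : x ∈ stdCorner r) (u : Fin r → ℤ)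
    (hu : x = toRealVec u) : ∃ k, x = cayleyVert k := by
  by_cases hall : ∀ i, x i = 0
  · exact ⟨0, funext fun i => by simp [hall i]⟩
  · push_neg at hall
    obtain ⟨i, hi⟩ := hall
    have h0 : ∀ j, 0 ≤ x j := fun j => stdCorner_nonneg hx j
    have h1 : ∑ j, x j ≤ 1 := stdCorner_sum_le hx
    have hxi : 1 ≤ x i := by
      have h0i : (0 : ℤ) ≤ u i := by
        have := h0 i; rw [hu] at this; simp only [toRealVec] at this; exact_mod_cast this
      have hne : u i ≠ 0 := by
        intro h; apply hi; rw [hu]; simp [toRealVec, h]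
      have : (1 : ℤ) ≤ u i := lt_of_le_of_ne h0i (Ne.symm hne)
      rw [hu]; show (1:ℝ) ≤ (u i : ℝ); exact_mod_cast this
    have hle : x i ≤ ∑ j, x j := Finset.single_le_sum (fun j _ => h0 j) (Finset.mem_univ i)
    have hxi1 : x i = 1 := le_antisymm (hle.trans h1) hxi
    have hrest : ∀ j, j ≠ i → x j = 0 := by
      have hsum : ∑ j ∈ Finset.univ.erase i, x j ≤ 0 := by
        have := Finset.add_sum_erase Finset.univ x (Finset.mem_univ i)
        linarith [this, h1, hxi]
      intro j hj
      have := (Finset.sum_eq_zero_iff_of_nonneg (fun j _ => h0 j)).mp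
        (le_antisymm hsum (Finset.sum_nonneg (fun j _ => h0 j)))
      exact this j (Finset.mem_erase.mpr ⟨hj, Finset.mem_univ j⟩)
    refine ⟨i.succ, funext fun j => ?_⟩
    simp only [cayleyVert_succ, Pi.single_apply]
    split_ifs with hji
    · subst hji; exact hxi1
    · exact hrest j hji

lemma vert_mem_of_mem_hull {V : Set (Fin r → ℝ)} (hV : V ⊆ Set.range cayleyVert)
    {k : Fin (r + 1)} (hk : cayleyVert k ∈ convexHull ℝ V) : cayleyVert k ∈ V := by
  by_contra hnot
  rcases Fin.eq_zero_or_eq_succ k with rfl | ⟨i, rfl⟩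
  · have hlin : IsLinearMap ℝ (fun w : Fin r → ℝ => -∑ j, w j) :=
      ⟨fun a b => by simp [Finset.sum_add_distrib]; ring,
       fun c a => by simp [Finset.mul_sum]⟩
    have hconv : Convex ℝ {w : Fin r → ℝ | -∑ j, w j ≤ -1} := convex_halfSpace_le hlin (-1)
    have hsub : convexHull ℝ V ⊆ {w | -∑ j, w j ≤ -1} := by
      apply convexHull_min _ hconv
      intro v hv
      obtain ⟨k', rfl⟩ := hV hv
      rcases Fin.eq_zero_or_eq_succ k' with rfl | ⟨j, rfl⟩
      · exact absurd hv hnot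
      · simp
    have := hsub hk
    simp at this
    linarith
  · have hlin : IsLinearMap ℝ (fun w : Fin r → ℝ => w i) := ⟨fun a b => rfl, fun c a => rfl⟩
    have hconv : Convex ℝ {w : Fin r → ℝ | w i ≤ 0} := convex_halfSpace_le hlin 0
    have hsub : convexHull ℝ V ⊆ {w | w i ≤ 0} := by
      apply convexHull_min _ hconv
      intro v hv
      obtain ⟨k', rfl⟩ := hV hv
      rcases Fin.eq_zero_or_eq_succ k' with rfl | ⟨j, rfl⟩
      · simp
      · have hji : j ≠ i := by
          rintro rfl; exact hnot hv
        simp [Pi.single_apply, hji]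
    have := hsub hk
    simp [Pi.single_apply] at this
    linarith

/-! ### Extending a surjective integer matrix to a unimodular one -/

set_option maxHeartbeats 1000000 in
lemma exists_unimodular_extension (h : r ≤ n) (B : Matrix (Fin r) (Fin n) ℤ)
    (hB : Surjective (B.mulVec : (Fin n → ℤ) → (Fin r → ℤ))) :
    ∃ A : Matrix (Fin n) (Fin n) ℤ, IsUnit A.det ∧ ∀ j, A (idxR h j) = B j := by
  set f : (Fin n → ℤ) →ₗ[ℤ] (Fin r → ℤ) := B.mulVecLin with hf
  have hfs : Surjective f := by exact hB
  obtain ⟨g, hg⟩ := Module.projective_lifting_property f LinearMap.id hfs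
  have hg' : ∀ z, f (g z) = z := fun z => by
    have := LinearMap.ext_iff.mp hg z
    simpa using this
  have hker : ∀ x : Fin n → ℤ, x - g (f x) ∈ LinearMap.ker f := by
    intro x
    simp [LinearMap.mem_ker, hg']
  set F : (Fin n → ℤ) →ₗ[ℤ] (LinearMap.ker f × (Fin r → ℤ)) :=
    (LinearMap.codRestrict (LinearMap.ker f) (LinearMap.id - g ∘ₗ f)
      (fun x => hker x)).prod f with hF
  set G : (LinearMap.ker f × (Fin r → ℤ)) →ₗ[ℤ] (Fin n → ℤ) :=
    (LinearMap.ker f).subtype ∘ₗ LinearMap.fst ℤ _ _ + g ∘ₗ LinearMap.snd ℤ _ _ with hG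
  have hFapp1 : ∀ x, ((F x).1 : Fin n → ℤ) = x - g (f x) := fun x => by
    rw [hF]
    simp [LinearMap.sub_apply]
  have hFapp2 : ∀ x, (F x).2 = f x := fun x => by rw [hF]; simp
  have hGapp : ∀ w, G w = (w.1 : Fin n → ℤ) + g w.2 := fun w => by
    rw [hG]; simp
  have hFG : F ∘ₗ G = LinearMap.id := by
    apply LinearMap.ext
    rintro ⟨⟨y, hy⟩, z⟩
    rw [LinearMap.mem_ker] at hy
    rw [LinearMap.comp_apply, hGapp]
    apply Prod.ext
    · apply Subtype.ext
      rw [hFapp1]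
      simp [map_add, hy, hg']
    · rw [hFapp2]
      simp [map_add, hy, hg']
  have hGF : G ∘ₗ F = LinearMap.id := by
    apply LinearMap.ext
    intro x
    rw [LinearMap.comp_apply, hGapp, hFapp1, hFapp2]
    simp
  set ψ : (Fin n → ℤ) ≃ₗ[ℤ] (LinearMap.ker f × (Fin r → ℤ)) := LinearEquiv.ofLinear F G hFG hGF
  have hrank : Module.finrank ℤ (LinearMap.ker f) = n - r := by
    have h1 : Module.finrank ℤ (Fin n → ℤ) = n := by simp [Module.finrank_pi]
    have h2 : Module.finrank ℤ (LinearMap.ker f × (Fin r → ℤ)) =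
        Module.finrank ℤ (LinearMap.ker f) + r := by
      rw [Module.finrank_prod]; simp [Module.finrank_pi]
    have := ψ.finrank_eq
    rw [h1, h2] at this
    omega
  set bas : Module.Basis (Fin (n - r)) ℤ (LinearMap.ker f) :=
    (Module.finBasis ℤ (LinearMap.ker f)).reindex (finCongr hrank)
  set φ : (Fin n → ℤ) ≃ₗ[ℤ] ((Fin (n - r) → ℤ) × (Fin r → ℤ)) :=
    ψ.trans (bas.equivFun.prodCongr (LinearEquiv.refl ℤ _))
  set μ : ((Fin (n - r) → ℤ) × (Fin r → ℤ)) ≃ₗ[ℤ] (Fin n → ℤ) :=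
    (LinearEquiv.sumArrowLequivProdArrow _ _ ℤ ℤ).symm.trans
      (LinearEquiv.funCongrLeft ℤ ℤ (EE h)) with hμ
  have hμ_apply : ∀ (p : Fin (n - r) → ℤ) (q : Fin r → ℤ), μ (p, q) = juxZ h p q := by
    intro p q
    funext i
    simp [hμ, juxZ, LinearEquiv.funCongrLeft, LinearEquiv.sumArrowLequivProdArrow,
      LinearMap.funLeft, Equiv.sumArrowEquivProdArrow]
  set α : (Fin n → ℤ) ≃ₗ[ℤ] (Fin n → ℤ) := φ.trans μ with hα
  have hα_snd : ∀ (x : Fin n → ℤ) (j : Fin r), α x (idxR h j) = f x j := by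
    intro x j
    have : φ x = (bas.equivFun (ψ x).1, (ψ x).2) := rfl
    rw [hα, LinearEquiv.trans_apply, this, hμ_apply]
    have : (ψ x).2 = f x := rfl
    rw [juxZ_idxR, this]
  set A : Matrix (Fin n) (Fin n) ℤ := LinearMap.toMatrix' (α : (Fin n → ℤ) →ₗ[ℤ] (Fin n → ℤ))
    with hA
  have hmul : ∀ x, A.mulVec x = α x := by
    intro x
    rw [← Matrix.toLin'_apply, hA, Matrix.toLin'_toMatrix']
    rfl
  refine ⟨A, ?_, ?_⟩
  · rw [← Matrix.isUnit_iff_isUnit_det]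
    refine ⟨⟨A, LinearMap.toMatrix' (α.symm : (Fin n → ℤ) →ₗ[ℤ] (Fin n → ℤ)), ?_, ?_⟩, rfl⟩
    · rw [hA, ← LinearMap.toMatrix'_comp, ← LinearMap.toMatrix'_id (R := ℤ) (n := Fin n)]
      congr 1
      ext x
      simp
    · rw [hA, ← LinearMap.toMatrix'_comp, ← LinearMap.toMatrix'_id (R := ℤ) (n := Fin n)]
      congr 1
      ext x
      simp
  · intro j
    funext i
    have h1 := congrArg (fun w => w (idxR h j)) (hmul (Pi.single i 1))
    simp only [Matrix.mulVec_single] at h1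
    rw [hα_snd (Pi.single i 1) j] at h1
    simp only [hf, Matrix.mulVecLin_apply, Matrix.mulVec_single] at h1
    simpa using h1

/-! ### More auxiliary lemmas -/

@[simp] lemma toRealVec_add {n : ℕ} (u w : Fin n → ℤ) :
    toRealVec (u + w) = toRealVec u + toRealVec w := by
  funext i; simp [toRealVec]

def affT (A : Matrix (Fin n) (Fin n) ℤ) (b : Fin n → ℤ) : (Fin n → ℝ) →ᵃ[ℝ] (Fin n → ℝ) where
  toFun x := realMap A x + toRealVec b
  linear := (A.map (fun z : ℤ => (z : ℝ))).mulVecLin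
  map_vadd' p v := by
    show realMap A (v + p) + toRealVec b = realMap A v + (realMap A p + toRealVec b)
    rw [realMap_linear, map_add]
    funext i
    simp
    ring

@[simp] lemma affT_apply (A : Matrix (Fin n) (Fin n) ℤ) (b : Fin n → ℤ) (x : Fin n → ℝ) :
    affT A b x = realMap A x + toRealVec b := rfl

lemma projRL_cayleySum (h : r ≤ n) (Q : Fin (r + 1) → Set (Fin (n - r) → ℝ))
    (hQ : ∀ k, (Q k).Nonempty) :
    projRL h '' cayleySum h Q = stdCorner r := by
  have h1 : projRL h '' cayleySum h Q
      = convexHull ℝ (projRL h '' (⋃ k, (fun p => juxtapose h p (cayleyVert k)) '' Q k)) := by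
    rw [cayleySum, ← (projRL h).coe_toAffineMap, AffineMap.image_convexHull]
  rw [h1]
  congr 1
  rw [Set.image_iUnion]
  have h2 : ∀ k : Fin (r+1),
      projRL h '' ((fun p => juxtapose h p (cayleyVert k)) '' Q k) = {cayleyVert k} := by
    intro k
    rw [Set.image_image]
    simp only [projRL_juxtapose]
    exact Set.Nonempty.image_const (hQ k) _
  calc (⋃ k, projRL h '' ((fun p => juxtapose h p (cayleyVert k)) '' Q k))
      = ⋃ k, {cayleyVert k} := by simp only [h2]
    _ = Set.range cayleyVert := by rw [Set.iUnion_singleton_eq_range]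


/-- For a lattice polytope `P ⊆ ℝⁿ` and `n ≥ r ≥ 1`, the following are
equivalent: (i) some `ℤ`-affine isomorphism `x ↦ Ax + b` (with `A ∈ GLₙ(ℤ)`, `b ∈ ℤⁿ`)
maps `P` onto a Cayley sum `P₀ * ⋯ * P_r` of lattice polytopes `P₀, …, P_r ⊆ ℝ^(n-r)`;
(ii) some lattice projection `ℝⁿ → ℝʳ` maps `P` onto a unimodular `r`-simplex. -/
theorem cayley_sum_iff_lattice_projection (n r : ℕ) (hr : 1 ≤ r) (hrn : r ≤ n)
    (P : Set (Fin n → ℝ)) (hP : IsLatticePolytope P) :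
    (∃ (A : Matrix (Fin n) (Fin n) ℤ) (b : Fin n → ℤ), IsUnit A.det ∧
      ∃ Q : Fin (r + 1) → Set (Fin (n - r) → ℝ), (∀ k, IsLatticePolytope (Q k)) ∧
        (fun x => realMap A x + toRealVec b) '' P = cayleySum hrn Q) ↔
    (∃ B : Matrix (Fin r) (Fin n) ℤ,
      Surjective (B.mulVec : (Fin n → ℤ) → (Fin r → ℤ)) ∧
      IsUnimodularSimplex (realMap B '' P)) := by

  classical
  constructor
  · rintro ⟨A, b, hA, Q, hQlat, hTP⟩
    set B : Matrix (Fin r) (Fin n) ℤ := Matrix.of (fun j i => A (idxR hrn j) i) with hBdef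
    have hinv : Invertible A := A.invertibleOfIsUnitDet hA
    have hsurj : Surjective (B.mulVec : (Fin n → ℤ) → (Fin r → ℤ)) := by
      intro y
      refine ⟨(⅟A).mulVec (juxZ hrn 0 y), ?_⟩
      funext j
      have hidx : B.mulVec ((⅟A).mulVec (juxZ hrn 0 y)) j
          = A.mulVec ((⅟A).mulVec (juxZ hrn 0 y)) (idxR hrn j) := rfl
      rw [hidx, Matrix.mulVec_mulVec, mul_invOf_self, Matrix.one_mulVec, juxZ_idxR]
    have hBreal : ∀ x : Fin n → ℝ, realMap B x = projRL hrn (realMap A x) := by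
      intro x
      funext j
      rw [realMap_apply, projRL_apply, realMap_apply]
      rfl
    have hQne : ∀ k, (Q k).Nonempty := by
      intro k
      obtain ⟨S, hS, hQk⟩ := hQlat k
      obtain ⟨s, hs⟩ := hS
      refine ⟨toRealVec s, ?_⟩
      rw [hQk]
      exact subset_convexHull ℝ _ (by
        rw [Finset.coe_image]
        exact ⟨s, by exact_mod_cast hs, rfl⟩)
    refine ⟨B, hsurj, fun j => - b (idxR hrn j), ?_⟩
    have key : realMap B '' P
        = (fun y => y - projRL hrn (toRealVec b)) ''
            (projRL hrn '' ((fun x => realMap A x + toRealVec b) '' P)) := by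
      rw [Set.image_image, Set.image_image]
      apply Set.image_congr'
      intro x
      rw [map_add, hBreal]
      abel
    have hfun : (fun y : Fin r → ℝ => y - projRL hrn (toRealVec b))
        = (fun x => toRealVec (fun j => -b (idxR hrn j)) + x) := by
      funext y
      funext j
      simp only [Pi.sub_apply, Pi.add_apply, projRL_apply, toRealVec]
      push_cast
      ring
    rw [key, hTP, projRL_cayleySum hrn Q hQne, stdCorner, range_cayleyVert, hfun]
  · rintro ⟨B, hBsurj, v, hsimp⟩
    obtain ⟨A, hA, hrows⟩ := exists_unimodular_extension hrn B hBsurj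
    set b : Fin n → ℤ := juxZ hrn 0 (-v) with hb
    obtain ⟨S, hSne, hPS⟩ := hP
    set S' : Finset (Fin n → ℤ) := S.image (fun u => A.mulVec u + b) with hS'def
    have hS'ne : S'.Nonempty := hSne.image _
    have hTP : affT A b '' P = convexHull ℝ (toRealVec '' (S' : Set (Fin n → ℤ))) := by
      rw [hPS, AffineMap.image_convexHull]
      congr 1
      rw [Finset.coe_image, Finset.coe_image, Set.image_image, Set.image_image]
      apply Set.image_congr'
      intro u
      rw [affT_apply, realMap_toRealVec, ← toRealVec_add]
    have hval : ∀ x : Fin n → ℝ, projRL hrn (affT A b x) = realMap B x - toRealVec v := by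
      intro x
      funext j
      simp only [projRL_apply, affT_apply, Pi.add_apply, Pi.sub_apply]
      have h1 : realMap A x (idxR hrn j) = realMap B x j := by
        rw [realMap_apply, realMap_apply, hrows j]
      have h2 : b (idxR hrn j) = - v j := by rw [hb, juxZ_idxR, Pi.neg_apply]
      rw [h1]
      simp only [toRealVec]
      rw [h2]
      push_cast
      ring
    have hprojTP : projRL hrn '' (affT A b '' P) = stdCorner r := by
      rw [Set.image_image]
      have e1 : (fun x => projRL hrn (affT A b x)) '' P
          = (fun y => y - toRealVec v) '' (realMap B '' P) := by
        rw [Set.image_image]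
        exact Set.image_congr' hval
      rw [e1, hsimp, Set.image_image]
      have e2 : (fun x => toRealVec v + x - toRealVec v) = fun x : Fin r → ℝ => x := by
        funext x; abel
      rw [e2, Set.image_id', stdCorner, range_cayleyVert]
    have hs'mem : ∀ s ∈ S', toRealVec s ∈ affT A b '' P := by
      intro s hs
      rw [hTP]
      exact subset_convexHull ℝ _ ⟨s, hs, rfl⟩
    have hvert : ∀ s ∈ S', ∃ k, projRL hrn (toRealVec s) = cayleyVert k := by
      intro s hs
      have hmem : projRL hrn (toRealVec s) ∈ stdCorner r := by
        rw [← hprojTP]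
        exact ⟨_, hs'mem s hs, rfl⟩
      exact eq_vert_of_int hmem (fun j => s (idxR hrn j)) (by funext j; rfl)
    set Sk : Fin (r + 1) → Finset (Fin n → ℤ) :=
      fun k => S'.filter (fun s => projRL hrn (toRealVec s) = cayleyVert k) with hSk
    set Q : Fin (r + 1) → Set (Fin (n - r) → ℝ) :=
      fun k => convexHull ℝ (↑(((Sk k).image (fun s => s ∘ idxM hrn)).image toRealVec)) with hQ
    -- the generating sets, as sets
    have hQset : ∀ k, Q k
        = convexHull ℝ ((fun s : Fin n → ℤ => toRealVec (s ∘ idxM hrn)) '' (Sk k : Set _)) := by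
      intro k
      have hcoe : (↑(((Sk k).image (fun s => s ∘ idxM hrn)).image toRealVec)
            : Set (Fin (n - r) → ℝ))
          = (fun s : Fin n → ℤ => toRealVec (s ∘ idxM hrn)) '' (Sk k : Set _) := by
        rw [Finset.coe_image, Finset.coe_image, Set.image_image]
      simp only [hQ]
      rw [hcoe]
    have hSkne : ∀ k, (Sk k).Nonempty := by
      intro k
      have hVsub : (fun s : Fin n → ℤ => projRL hrn (toRealVec s)) '' (S' : Set _)
          ⊆ Set.range cayleyVert := by
        rintro _ ⟨s, hs, rfl⟩
        obtain ⟨k, hk⟩ := hvert s hs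
        exact ⟨k, hk.symm⟩
      have hmem : cayleyVert k ∈ convexHull ℝ
          ((fun s : Fin n → ℤ => projRL hrn (toRealVec s)) '' (S' : Set _)) := by
        have : cayleyVert k ∈ stdCorner r := subset_convexHull ℝ _ ⟨k, rfl⟩
        rw [← hprojTP, hTP, ← (projRL hrn).coe_toAffineMap, AffineMap.image_convexHull,
          Set.image_image] at this
        simpa using this
      obtain ⟨s, hs, hsk⟩ := vert_mem_of_mem_hull hVsub hmem
      exact ⟨s, by rw [hSk]; exact Finset.mem_filter.mpr ⟨hs, hsk⟩⟩
    have hQlat : ∀ k, IsLatticePolytope (Q k) := by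
      intro k
      exact ⟨(Sk k).image (fun s => s ∘ idxM hrn), (hSkne k).image _, by rw [hQ]⟩
    -- key identities
    have hrecon : ∀ (s : Fin n → ℤ) k, projRL hrn (toRealVec s) = cayleyVert k →
        juxtapose hrn (toRealVec (s ∘ idxM hrn)) (cayleyVert k) = toRealVec s := by
      intro s k hk
      have h1 : toRealVec (s ∘ idxM hrn) = toRealVec s ∘ idxM hrn := rfl
      have h2 : cayleyVert k = toRealVec s ∘ idxR hrn := by
        rw [← hk]; rfl
      rw [h1, h2, juxtapose_eta]
    have hmain : affT A b '' P = cayleySum hrn Q := by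
      rw [hTP]
      apply Set.Subset.antisymm
      · apply convexHull_min _ (convex_convexHull ℝ _)
        rintro _ ⟨s, hs, rfl⟩
        obtain ⟨k, hk⟩ := hvert s hs
        apply subset_convexHull ℝ _
        refine Set.mem_iUnion.mpr ⟨k, ⟨toRealVec (s ∘ idxM hrn), ?_, hrecon s k hk⟩⟩
        rw [hQset]
        exact subset_convexHull ℝ _ ⟨s, by rw [hSk]; exact Finset.mem_filter.mpr ⟨hs, hk⟩, rfl⟩
      · apply convexHull_min _ (convex_convexHull ℝ _)
        apply Set.iUnion_subset
        intro k
        have himg : (fun p => juxtapose hrn p (cayleyVert k)) '' Q k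
            = convexHull ℝ ((fun s : Fin n → ℤ =>
                juxtapose hrn (toRealVec (s ∘ idxM hrn)) (cayleyVert k)) '' (Sk k : Set _)) := by
          rw [hQset]
          have : (fun p => juxtapose hrn p (cayleyVert k)) = ⇑(juxA hrn (cayleyVert k)) := rfl
          rw [this, AffineMap.image_convexHull, Set.image_image]
          rfl
        rw [himg]
        apply convexHull_mono
        rintro _ ⟨s, hs, rfl⟩
        have hs' : s ∈ Sk k := Finset.mem_coe.mp hs
        rw [hSk] at hs'
        have hk : projRL hrn (toRealVec s) = cayleyVert k := (Finset.mem_filter.mp hs').2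
        exact ⟨s, Finset.mem_coe.mpr (Finset.mem_filter.mp hs').1, (hrecon s k hk).symm⟩
    refine ⟨A, b, hA, Q, hQlat, ?_⟩
    have : (fun x => realMap A x + toRealVec b) = ⇑(affT A b) := rfl
    rw [this, hmain]
end
end

section
/- Let n, r ≥ 1 and let f : ℂ[ℤⁿ] → ℂ[ℤʳ] be a ℂ-algebra homomorphism satisfying ε ∘ f = ε, where ε denotes the augmentation on each group algebra. Then there exists a unique group homomorphism π' : ℤⁿ → ℤʳ such that f(x^u) = x^{π'(u)} for every u ∈ ℤⁿ; that is, f is the ℂ-algebra homomorphism induced by π'. -/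
open Function

noncomputable section

/-- The augmentation `ε : ℂ[G] → ℂ`, the `ℂ`-algebra homomorphism sending every
`x^u` to `1` (i.e. sending `Σ c_u x^u` to `Σ c_u`). -/
def aug (G : Type*) [AddCommMonoid G] : AddMonoidAlgebra ℂ G →ₐ[ℂ] ℂ :=
  AddMonoidAlgebra.lift ℂ ℂ G 1

section Aux

variable {r : ℕ}

/-- At the sum of the maximal (w.r.t. an injective homomorphic linear embedding) support
elements, the coefficient of a product is the product of the two maximal coefficients. -/
lemma exists_max_coeff {L : Type*} [AddCommGroup L] [LinearOrder L] [IsOrderedAddMonoid L]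
    (E : (Fin r → ℤ) →+ L) (hE : Function.Injective E)
    {p q : AddMonoidAlgebra ℂ (Fin r → ℤ)} (hp : p ≠ 0) (hq : q ≠ 0) :
    ∃ a₁ ∈ p.coeff.support, ∃ a₂ ∈ q.coeff.support,
      (∀ b ∈ p.coeff.support, E b ≤ E a₁) ∧ (∀ b ∈ q.coeff.support, E b ≤ E a₂) ∧
      (p * q).coeff (a₁ + a₂) = p.coeff a₁ * q.coeff a₂ := by
  classical
  obtain ⟨a₁, ha₁, hmax₁⟩ :=
    p.coeff.support.exists_max_image E (Finsupp.support_nonempty_iff.mpr (AddMonoidAlgebra.coeff_eq_zero.not.mpr hp))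
  obtain ⟨a₂, ha₂, hmax₂⟩ :=
    q.coeff.support.exists_max_image E (Finsupp.support_nonempty_iff.mpr (AddMonoidAlgebra.coeff_eq_zero.not.mpr hq))
  refine ⟨a₁, ha₁, a₂, ha₂, hmax₁, hmax₂, ?_⟩
  rw [AddMonoidAlgebra.mul_apply]
  rw [Finsupp.sum, Finset.sum_eq_single_of_mem a₁ ha₁ ?_]
  · rw [Finsupp.sum, Finset.sum_eq_single_of_mem a₂ ha₂ ?_]
    · rw [if_pos rfl]
    · intro y hy hne
      exact if_neg fun h => hne (add_left_cancel h)
  · intro x hx hne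
    apply Finset.sum_eq_zero
    intro y hy
    apply if_neg
    intro h
    have h1 : E x < E a₁ := lt_of_le_of_ne (hmax₁ x hx) fun he => hne (hE he)
    have h2 : E x + E y < E a₁ + E a₂ := add_lt_add_of_lt_of_le h1 (hmax₂ y hy)
    rw [← map_add, ← map_add, h] at h2
    exact lt_irrefl _ h2

/-- Units of `ℂ[ℤʳ]` have single-monomial factors. -/
lemma eq_single_of_mul_eq_one {p q : AddMonoidAlgebra ℂ (Fin r → ℤ)}
    (h : p * q = 1) : ∃ a c, c ≠ 0 ∧ p = AddMonoidAlgebra.single a c := by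
  classical
  letI : WellFoundedLT (Fin r) := inferInstance
  letI : LinearOrder (Lex (Fin r → ℤ)) := inferInstance
  have hp : p ≠ 0 := by
    rintro rfl
    rw [zero_mul] at h
    exact zero_ne_one h
  have hq : q ≠ 0 := by
    rintro rfl
    rw [mul_zero] at h
    exact zero_ne_one h
  set E₁ : (Fin r → ℤ) →+ Lex (Fin r → ℤ) :=
    { toFun := toLex, map_zero' := rfl, map_add' := fun _ _ => rfl } with hE₁def
  have hE₁ : Function.Injective E₁ := toLex.injective
  have hE₂ : Function.Injective (-E₁) := fun a b hab => hE₁ (neg_injective hab)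
  obtain ⟨a₁, ha₁, a₂, ha₂, hm₁, hm₂, hc⟩ := exists_max_coeff E₁ hE₁ hp hq
  obtain ⟨b₁, hb₁, b₂, hb₂, hn₁, hn₂, hd⟩ := exists_max_coeff (-E₁) hE₂ hp hq
  -- from the coefficient identity get `a₁ + a₂ = 0` and `b₁ + b₂ = 0`
  have key : ∀ x y : Fin r → ℤ, (p * q).coeff (x + y) = p.coeff x * q.coeff y →
      x ∈ p.coeff.support → y ∈ q.coeff.support → x + y = 0 := by
    intro x y hxy hx hy
    have hne : (p * q).coeff (x + y) ≠ 0 := by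
      rw [hxy]
      exact mul_ne_zero (Finsupp.mem_support_iff.mp hx) (Finsupp.mem_support_iff.mp hy)
    rw [h] at hne
    rw [AddMonoidAlgebra.one_def, AddMonoidAlgebra.coeff_single] at hne
    by_contra hzero
    exact hne (Finsupp.single_eq_of_ne' fun h0 => hzero h0.symm)
  have hsum₁ : a₁ + a₂ = 0 := key a₁ a₂ hc ha₁ ha₂
  have hsum₂ : b₁ + b₂ = 0 := key b₁ b₂ hd hb₁ hb₂
  -- show the support of `p` is `{a₁}`
  have hE₁a : E₁ a₁ = - E₁ a₂ := by
    rw [eq_neg_iff_add_eq_zero, ← map_add, hsum₁, map_zero]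
  have hE₁b : E₁ b₁ = - E₁ b₂ := by
    rw [eq_neg_iff_add_eq_zero, ← map_add, hsum₂, map_zero]
  have hba : E₁ a₁ ≤ E₁ b₁ := by
    have := hn₂ a₂ ha₂  -- (-E₁) a₂ ≤ (-E₁) b₂
    simp only [AddMonoidHom.neg_apply, neg_le_neg_iff] at this
    rw [hE₁a, hE₁b]
    exact neg_le_neg this
  have hsub : p.coeff.support ⊆ {a₁} := by
    intro a ha
    have h1 : E₁ a ≤ E₁ a₁ := hm₁ a ha
    have h2 : E₁ b₁ ≤ E₁ a := by
      have := hn₁ a ha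
      simp only [AddMonoidHom.neg_apply, neg_le_neg_iff] at this
      exact this
    have : E₁ a = E₁ a₁ := le_antisymm h1 (le_trans hba h2)
    simp [hE₁ this]
  refine ⟨a₁, p.coeff a₁, Finsupp.mem_support_iff.mp ha₁, ?_⟩
  exact AddMonoidAlgebra.coeff_injective (Finsupp.support_subset_singleton.mp hsub)

lemma aug_single {G : Type*} [AddCommMonoid G] (a : G) (c : ℂ) :
    aug G (AddMonoidAlgebra.single a c) = c := by
  simp [aug, AddMonoidAlgebra.lift_single]

end Aux

/-- Let `n, r ≥ 1` and let `f : ℂ[ℤⁿ] → ℂ[ℤʳ]` be a `ℂ`-algebra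
homomorphism with `ε ∘ f = ε`. Then there is a unique group homomorphism
`π' : ℤⁿ → ℤʳ` with `f(x^u) = x^{π'(u)}` for all `u ∈ ℤⁿ`; that is, `f` is
induced by `π'`. -/
theorem algHom_is_induced_by_group_hom (n r : ℕ) (hn : 1 ≤ n) (hr : 1 ≤ r)
    (f : AddMonoidAlgebra ℂ (Fin n → ℤ) →ₐ[ℂ] AddMonoidAlgebra ℂ (Fin r → ℤ))
    (hf : (aug (Fin r → ℤ)).comp f = aug (Fin n → ℤ)) :
    ∃! π' : (Fin n → ℤ) →+ (Fin r → ℤ),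
      ∀ u : Fin n → ℤ,
        f (AddMonoidAlgebra.single u 1) = AddMonoidAlgebra.single (π' u) 1 := by
  classical
  -- Step 1: for each u, f (single u 1) is a monomial with coefficient 1
  have hmono : ∀ u : Fin n → ℤ, ∃ a : Fin r → ℤ,
      f (AddMonoidAlgebra.single u 1) = AddMonoidAlgebra.single a 1 := by
    intro u
    have hmul : f (AddMonoidAlgebra.single u 1) * f (AddMonoidAlgebra.single (-u) 1) = 1 := by
      rw [← map_mul, AddMonoidAlgebra.single_mul_single, add_neg_cancel, mul_one,
        ← AddMonoidAlgebra.one_def, map_one]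
    obtain ⟨a, c, hc, hsingle⟩ := eq_single_of_mul_eq_one hmul
    have haug : aug (Fin r → ℤ) (f (AddMonoidAlgebra.single u 1)) = 1 := by
      have := congrArg (fun g => g (AddMonoidAlgebra.single u (1 : ℂ))) hf
      simp only [AlgHom.comp_apply] at this
      rw [this, aug_single]
    rw [hsingle, aug_single] at haug
    rw [hsingle, haug]
    exact ⟨a, rfl⟩
  choose π hπ using hmono
  have hsingle_inj : ∀ a b : Fin r → ℤ,
      (AddMonoidAlgebra.single a 1 : AddMonoidAlgebra ℂ (Fin r → ℤ)) =
      AddMonoidAlgebra.single b 1 → a = b := by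
    intro a b hab
    exact (AddMonoidAlgebra.single_left_inj one_ne_zero).mp hab
  have hadd : ∀ u v : Fin n → ℤ, π (u + v) = π u + π v := by
    intro u v
    apply hsingle_inj
    calc (AddMonoidAlgebra.single (π (u + v)) 1 : AddMonoidAlgebra ℂ (Fin r → ℤ))
        = f (AddMonoidAlgebra.single (u + v) 1) := (hπ (u + v)).symm
      _ = f (AddMonoidAlgebra.single u 1 * AddMonoidAlgebra.single v 1) := by
          rw [AddMonoidAlgebra.single_mul_single, mul_one]
      _ = AddMonoidAlgebra.single (π u) 1 * AddMonoidAlgebra.single (π v) 1 := by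
          rw [map_mul, hπ u, hπ v]
      _ = AddMonoidAlgebra.single (π u + π v) 1 := by
          rw [AddMonoidAlgebra.single_mul_single, mul_one]
  refine ⟨AddMonoidHom.mk' π hadd, fun u => hπ u, ?_⟩
  intro ψ hψ
  apply AddMonoidHom.ext
  intro u
  exact hsingle_inj _ _ ((hψ u).symm.trans (hπ u))
end
end
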